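/- Let L₀ a = Σ_j ([ℓ_j*, a]ℓ_j + ℓ_j*[a, ℓ_j]) be a Lindblad generator on A = End(H) and σ a faithful state. If Σ_j ℓ_j ⊗ (σℓ_j*σ^{-1}) = Σ_j ℓ_j* ⊗ ℓ_j (as elements of A⊗A), then L₀ is self-adjoint with respect to the GNS inner product ⟨a,b⟩_σ = tr(a*σb). -/

import Mathlib

set_option maxHeartbeats 1000000

noncomputable section

open ContinuousLinearMap TensorProduct

/-- The algebra `A = End(H)` for `H = ℂⁿ` a finite-dimensional Hilbert space. -/
abbrev QA (n : ℕ) := EuclideanSpace ℂ (Fin n) →L[ℂ] EuclideanSpace ℂ (Fin n)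

/-- The trace of an operator on the finite-dimensional Hilbert space. -/
noncomputable def trC {n : ℕ} (a : QA n) : ℂ :=
  LinearMap.trace ℂ (EuclideanSpace ℂ (Fin n)) (a : _ →ₗ[ℂ] _)

/-- The Lindblad generator `L₀ a = Σ_j ([ℓ_j*, a] ℓ_j + ℓ_j* [a, ℓ_j])`. -/
noncomputable def lindblad {n N : ℕ} (ℓ : Fin N → QA n) (a : QA n) : QA n :=
  ∑ j : Fin N,
    ((ContinuousLinearMap.adjoint (ℓ j) ∘L a - a ∘L ContinuousLinearMap.adjoint (ℓ j)) ∘L ℓ j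
      + ContinuousLinearMap.adjoint (ℓ j) ∘L (a ∘L ℓ j - ℓ j ∘L a))

noncomputable def trCL (n : ℕ) : QA n →ₗ[ℂ] ℂ :=
  (LinearMap.trace ℂ (EuclideanSpace ℂ (Fin n))).comp (ContinuousLinearMap.coeLM ℂ)

lemma trC_eq {n} (a : QA n) : trC a = trCL n a := rfl
lemma trC_add {n} (x y : QA n) : trC (x + y) = trC x + trC y := by simp [trC_eq]
lemma trC_sub {n} (x y : QA n) : trC (x - y) = trC x - trC y := by simp [trC_eq]
lemma trC_smul {n} (s : ℂ) (x : QA n) : trC (s • x) = s * trC x := by simp [trC_eq]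
lemma trC_sum {n N} (f : Fin N → QA n) : trC (∑ j, f j) = ∑ j, trC (f j) := by simp [trC_eq]

lemma coe_mul' {n} (x y : QA n) :
    ((x*y : QA n) : EuclideanSpace ℂ (Fin n) →ₗ[ℂ] EuclideanSpace ℂ (Fin n))
    = ((x : EuclideanSpace ℂ (Fin n) →ₗ[ℂ] EuclideanSpace ℂ (Fin n)) * (y : EuclideanSpace ℂ (Fin n) →ₗ[ℂ] EuclideanSpace ℂ (Fin n))) := rfl

lemma trC_mul_comm {n} (x y : QA n) : trC (x*y) = trC (y*x) := by
  unfold trC; rw [coe_mul', coe_mul']; exact LinearMap.trace_mul_comm ℂ _ _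

lemma trC_ext {n} {x y : QA n} (h : x = y) : trC x = trC y := congrArg _ h

noncomputable def bl {n} (c1 c2 c3 : QA n) : QA n →ₗ[ℂ] QA n →ₗ[ℂ] ℂ :=
  LinearMap.mk₂ ℂ (fun x y => trC (c1 * x * c2 * y * c3))
    (by intros; simp [mul_add, add_mul, trC_add])
    (by intros; simp [mul_smul_comm, smul_mul_assoc, trC_smul])
    (by intros; simp [mul_add, add_mul, trC_add])
    (by intros; simp [mul_smul_comm, smul_mul_assoc, trC_smul])

lemma bl_apply {n} (c1 c2 c3 x y : QA n) : bl c1 c2 c3 x y = trC (c1 * x * c2 * y * c3) := rfl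

lemma adj_lindblad {n N} (ℓ : Fin N → QA n) (a : QA n) :
    adjoint (lindblad ℓ a) = lindblad ℓ (adjoint a) := by
  unfold lindblad
  simp only [← star_eq_adjoint, ← mul_def, star_sum, star_add, star_sub, star_mul, star_star]
  apply Finset.sum_congr rfl
  intros
  ext v
  simp only [ContinuousLinearMap.add_apply, ContinuousLinearMap.sub_apply, ContinuousLinearMap.mul_apply, map_sub]
  abel

/-- If `Σ_j ℓ_j ⊗ (σ ℓ_j* σ⁻¹) = Σ_j ℓ_j* ⊗ ℓ_j` in `A ⊗ A`, then the Lindblad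
generator `L₀` is self-adjoint with respect to the GNS inner product
`⟨a,b⟩_σ = tr(a* σ b)` induced by the faithful state `σ`. -/
theorem lindblad_selfadjoint_of_tensor_condition (n N : ℕ) (σ σinv : QA n)
    (hσpos : σ.IsPositive) (hσtr : trC σ = 1)
    (hσinv : σ ∘L σinv = 1) (hσinv' : σinv ∘L σ = 1)
    (ℓ : Fin N → QA n)
    (hcond : ∑ j : Fin N,
        (ℓ j) ⊗ₜ[ℂ] ((σ ∘L ContinuousLinearMap.adjoint (ℓ j)) ∘L σinv)
      = ∑ j : Fin N, (ContinuousLinearMap.adjoint (ℓ j)) ⊗ₜ[ℂ] (ℓ j)) :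
    ∀ a b : QA n,
      trC ((ContinuousLinearMap.adjoint (lindblad ℓ a) ∘L σ) ∘L b)
        = trC ((ContinuousLinearMap.adjoint a ∘L σ) ∘L lindblad ℓ b) := by
  have hM : σinv * σ = 1 := hσinv'
  have key : ∀ B : QA n →ₗ[ℂ] QA n →ₗ[ℂ] ℂ,
      ∑ j, B (ℓ j) ((σ ∘L adjoint (ℓ j)) ∘L σinv) = ∑ j, B (adjoint (ℓ j)) (ℓ j) := by
    intro B
    have h := congrArg (TensorProduct.lift B) hcond
    simp only [map_sum, TensorProduct.lift.tmul] at h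
    exact h
  intro a b
  rw [adj_lindblad]
  generalize adjoint a = c
  have hsplit : ∀ x : QA n, lindblad ℓ x =
      (∑ j, adjoint (ℓ j) * x * ℓ j) + (∑ j, adjoint (ℓ j) * x * ℓ j)
      - (∑ j, x * (adjoint (ℓ j) * ℓ j)) - (∑ j, adjoint (ℓ j) * ℓ j * x) := by
    intro x
    unfold lindblad
    calc ∑ j : Fin N, ((adjoint (ℓ j) ∘L x - x ∘L adjoint (ℓ j)) ∘L ℓ j
            + adjoint (ℓ j) ∘L (x ∘L ℓ j - ℓ j ∘L x))
        = ∑ j : Fin N, (adjoint (ℓ j) * x * ℓ j + adjoint (ℓ j) * x * ℓ j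
            - x * (adjoint (ℓ j) * ℓ j) - adjoint (ℓ j) * ℓ j * x) := by
          apply Finset.sum_congr rfl
          intros
          ext v
          simp only [ContinuousLinearMap.add_apply, ContinuousLinearMap.sub_apply, ContinuousLinearMap.mul_apply, ContinuousLinearMap.comp_apply, map_sub]
          abel
      _ = _ := by
          rw [Finset.sum_sub_distrib, Finset.sum_sub_distrib, Finset.sum_add_distrib]
  simp only [← mul_def]
  rw [hsplit c, hsplit b]
  simp only [add_mul, sub_mul, mul_add, mul_sub, Finset.sum_mul, Finset.mul_sum,
    trC_add, trC_sub, trC_sum]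
  have E1 : ∑ j : Fin N, trC (adjoint (ℓ j) * c * ℓ j * σ * b)
      = ∑ j : Fin N, trC (c * σ * (adjoint (ℓ j) * b * ℓ j)) := by
    have h := key (bl 1 c (σ*b))
    simp only [bl_apply] at h
    calc ∑ j : Fin N, trC (adjoint (ℓ j) * c * ℓ j * σ * b)
        = ∑ j : Fin N, trC ((1:QA n) * adjoint (ℓ j) * c * ℓ j * (σ*b)) :=
          Finset.sum_congr rfl fun j _ => trC_ext (by simp only [one_mul, mul_assoc])
      _ = ∑ j : Fin N, trC ((1:QA n) * ℓ j * c * ((σ ∘L adjoint (ℓ j)) ∘L σinv) * (σ*b)) := h.symm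
      _ = ∑ j : Fin N, trC (c * σ * (adjoint (ℓ j) * b * ℓ j)) := by
          apply Finset.sum_congr rfl
          intro j _
          rw [trC_ext (show (1:QA n) * ℓ j * c * ((σ ∘L adjoint (ℓ j)) ∘L σinv) * (σ*b)
              = ℓ j * (c * σ * (adjoint (ℓ j) * b)) from by
            simp only [← mul_def, one_mul, mul_assoc]
            rw [← mul_assoc σinv σ b, hM, one_mul]), trC_mul_comm]
          exact trC_ext (by simp only [mul_assoc])
  have E2 : ∀ j : Fin N, trC (adjoint (ℓ j) * ℓ j * c * σ * b)
      = trC (c * σ * (b * (adjoint (ℓ j) * ℓ j))) := by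
    intro j
    rw [trC_ext (show adjoint (ℓ j) * ℓ j * c * σ * b
        = (adjoint (ℓ j) * ℓ j) * (c * σ * b) from by simp only [mul_assoc]), trC_mul_comm]
    exact trC_ext (by simp only [mul_assoc])
  have E3 : ∑ j : Fin N, trC (c * (adjoint (ℓ j) * ℓ j) * σ * b)
      = ∑ j : Fin N, trC (c * σ * (adjoint (ℓ j) * ℓ j * b)) := by
    have h1 := key (bl c 1 (σ*b))
    have h2 := key ((bl c σ b).flip)
    simp only [bl_apply, LinearMap.flip_apply] at h1 h2
    calc ∑ j : Fin N, trC (c * (adjoint (ℓ j) * ℓ j) * σ * b)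
        = ∑ j : Fin N, trC (c * adjoint (ℓ j) * 1 * ℓ j * (σ*b)) :=
          Finset.sum_congr rfl fun j _ => trC_ext (by simp only [mul_one, mul_assoc])
      _ = ∑ j : Fin N, trC (c * ℓ j * 1 * ((σ ∘L adjoint (ℓ j)) ∘L σinv) * (σ*b)) := h1.symm
      _ = ∑ j : Fin N, trC (c * ℓ j * σ * adjoint (ℓ j) * b) := by
          apply Finset.sum_congr rfl
          intro j _
          apply trC_ext
          simp only [← mul_def, mul_one, mul_assoc]
          rw [← mul_assoc σinv σ b, hM, one_mul]
      _ = ∑ j : Fin N, trC (c * ((σ ∘L adjoint (ℓ j)) ∘L σinv) * σ * ℓ j * b) := h2.symm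
      _ = ∑ j : Fin N, trC (c * σ * (adjoint (ℓ j) * ℓ j * b)) := by
          apply Finset.sum_congr rfl
          intro j _
          apply trC_ext
          simp only [← mul_def, mul_assoc]
          rw [← mul_assoc σinv σ (ℓ j * b), hM, one_mul]
  rw [E1, E3, Finset.sum_congr rfl (fun j _ => E2 j)]
  ring
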